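/- (Theorem 4.2, two decision makers: global optimality is preserved under the policy-dependent static reduction.) A dynamic policy (γ₁*, γ₂*) is globally optimal for J^D (i.e., J^D(γ₁*, γ₂*) ≤ J^D(γ₁, γ₂) for all measurable γ₁ : Y₁ → U₁ and γ₂ : Y₁ × Ŷ' → U₂) if and only if the static policy (γ₁*, δ₂*) is globally optimal for J^S (i.e., J^S(γ₁*, δ₂*) ≤ J^S(γ₁, δ₂) for all measurable γ₁ and δ₂ : Y₁ × Ŷ → U₂), where δ₂*(y, s) := γ₂*(y, g(s, γ₁*(y))). In particular, the infimum of J^D over dynamic policies equals the infimum of J^S over static policies. -/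
import Mathlib


open MeasureTheory
open scoped ENNReal

/-- **Theorem 4.2 (two decision makers): global optimality is preserved under the
policy-dependent static reduction.** Under the invertibility assumption on the dynamic
observation, a dynamic policy `(γ₁s, γ₂s)` is globally optimal for the dynamic cost `JD`
iff the corresponding static policy `(γ₁s, (y, s) ↦ γ₂s (y, g (s, γ₁s y)))` is globally
optimal for the static cost `JS`; moreover the infima of `JD` and `JS` over measurable
policies coincide. -/
theorem global_optimality_policy_dependent_static_reduction
    {Ω Ω₀ Y₁ Yh Yh' U₁ U₂ : Type*}
    [MeasurableSpace Ω] [MeasurableSpace Ω₀] [MeasurableSpace Y₁]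
    [MeasurableSpace Yh] [MeasurableSpace Yh'] [MeasurableSpace U₁] [MeasurableSpace U₂]
    (P : Measure Ω) [IsProbabilityMeasure P]
    (ω₀ : Ω → Ω₀) (y₁ : Ω → Y₁) (yhat₂ : Ω → Yh)
    (hω₀ : Measurable ω₀) (hy₁ : Measurable y₁) (hyhat₂ : Measurable yhat₂)
    (g : Yh × U₁ → Yh') (ginv : Yh' × U₁ → Yh)
    (hg : Measurable g) (hginv : Measurable ginv)
    (hgl : ∀ (s : Yh) (u : U₁), ginv (g (s, u), u) = s)
    (hgr : ∀ (t : Yh') (u : U₁), g (ginv (t, u), u) = t)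
    (c : Ω₀ × U₁ × U₂ → ℝ≥0∞) (hc : Measurable c)
    (JD : (Y₁ → U₁) → (Y₁ × Yh' → U₂) → ℝ≥0∞)
    (JS : (Y₁ → U₁) → (Y₁ × Yh → U₂) → ℝ≥0∞)
    (hJD : ∀ γ₁ γ₂, JD γ₁ γ₂
      = ∫⁻ ω, c (ω₀ ω, γ₁ (y₁ ω), γ₂ (y₁ ω, g (yhat₂ ω, γ₁ (y₁ ω)))) ∂P)
    (hJS : ∀ γ₁ δ₂, JS γ₁ δ₂
      = ∫⁻ ω, c (ω₀ ω, γ₁ (y₁ ω), δ₂ (y₁ ω, yhat₂ ω)) ∂P)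
    (γ₁s : Y₁ → U₁) (γ₂s : Y₁ × Yh' → U₂)
    (hγ₁s : Measurable γ₁s) (hγ₂s : Measurable γ₂s) :
    ((∀ (γ₁ : Y₁ → U₁) (γ₂ : Y₁ × Yh' → U₂), Measurable γ₁ → Measurable γ₂ →
        JD γ₁s γ₂s ≤ JD γ₁ γ₂)
      ↔ (∀ (γ₁ : Y₁ → U₁) (δ₂ : Y₁ × Yh → U₂), Measurable γ₁ → Measurable δ₂ →
        JS γ₁s (fun p => γ₂s (p.1, g (p.2, γ₁s p.1))) ≤ JS γ₁ δ₂))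
    ∧ (⨅ (γ₁ : Y₁ → U₁) (_ : Measurable γ₁) (γ₂ : Y₁ × Yh' → U₂) (_ : Measurable γ₂),
        JD γ₁ γ₂)
      = ⨅ (γ₁ : Y₁ → U₁) (_ : Measurable γ₁) (δ₂ : Y₁ × Yh → U₂) (_ : Measurable δ₂),
        JS γ₁ δ₂ := by
  -- key equalities
  have key1 : ∀ (γ₁ : Y₁ → U₁) (γ₂ : Y₁ × Yh' → U₂),
      JD γ₁ γ₂ = JS γ₁ (fun p => γ₂ (p.1, g (p.2, γ₁ p.1))) := by
    intro γ₁ γ₂; rw [hJD, hJS]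
  have key2 : ∀ (γ₁ : Y₁ → U₁) (δ₂ : Y₁ × Yh → U₂),
      JS γ₁ δ₂ = JD γ₁ (fun p => δ₂ (p.1, ginv (p.2, γ₁ p.1))) := by
    intro γ₁ δ₂; rw [hJD, hJS]
    simp only [hgl]
  have m1 : ∀ (γ₁ : Y₁ → U₁) (γ₂ : Y₁ × Yh' → U₂), Measurable γ₁ → Measurable γ₂ →
      Measurable (fun p : Y₁ × Yh => γ₂ (p.1, g (p.2, γ₁ p.1))) := by
    intro γ₁ γ₂ h1 h2
    exact h2.comp (measurable_fst.prodMk (hg.comp (measurable_snd.prodMk (h1.comp measurable_fst))))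
  have m2 : ∀ (γ₁ : Y₁ → U₁) (δ₂ : Y₁ × Yh → U₂), Measurable γ₁ → Measurable δ₂ →
      Measurable (fun p : Y₁ × Yh' => δ₂ (p.1, ginv (p.2, γ₁ p.1))) := by
    intro γ₁ δ₂ h1 h2
    exact h2.comp (measurable_fst.prodMk (hginv.comp (measurable_snd.prodMk (h1.comp measurable_fst))))
  constructor
  · constructor
    · intro h γ₁ δ₂ hγ₁ hδ₂
      rw [← key1, key2 γ₁ δ₂]
      exact h γ₁ _ hγ₁ (m2 γ₁ δ₂ hγ₁ hδ₂)
    · intro h γ₁ γ₂ hγ₁ hγ₂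
      rw [key1 γ₁s γ₂s, key1 γ₁ γ₂]
      exact h γ₁ _ hγ₁ (m1 γ₁ γ₂ hγ₁ hγ₂)
  · apply le_antisymm
    · refine le_iInf₂ fun γ₁ hγ₁ => le_iInf₂ fun δ₂ hδ₂ => ?_
      rw [key2 γ₁ δ₂]
      exact iInf₂_le_of_le γ₁ hγ₁ (iInf₂_le _ (m2 γ₁ δ₂ hγ₁ hδ₂))
    · refine le_iInf₂ fun γ₁ hγ₁ => le_iInf₂ fun γ₂ hγ₂ => ?_
      rw [key1 γ₁ γ₂]
      exact iInf₂_le_of_le γ₁ hγ₁ (iInf₂_le _ (m1 γ₁ γ₂ hγ₁ hγ₂))
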